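/- Let a < b < c be real numbers, θ_l, θ_r ∈ [0,1], α ∈ (0,1), and set k = α·θ_l − (1-α)·θ_r, T(x) = (x-a)²/((b-a)(c-a)), U(x) = (c-x)²/((c-a)(c-b)). Define F : ℝ → ℝ by F(x) = 0 for x ≤ a; F(x) = T(x) − k·T(x) for a < x ≤ a + (b-a)/√2; F(x) = T(x) − k·((b-a)/(c-a) − T(x)) for a + (b-a)/√2 ≤ x < b; F(b) = (b-a)/(c-a); F(x) = 1 − U(x) − k·((c-b)/(c-a) − U(x)) for b < x ≤ c − (c-b)/√2; F(x) = 1 − U(x) − k·U(x) for c − (c-b)/√2 ≤ x < c; F(x) = 1 for x ≥ c. Then F is monotone increasing on ℝ (i.e., x ≤ y implies F(x) ≤ F(y)). -/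

import Mathlib

/-- `T(x) = (x-a)²/((b-a)(c-a))`. -/
noncomputable def Ttri (a b c x : ℝ) : ℝ := (x - a) ^ 2 / ((b - a) * (c - a))

/-- `U(x) = (c-x)²/((c-a)(c-b))`. -/
noncomputable def Utri (a b c x : ℝ) : ℝ := (c - x) ^ 2 / ((c - a) * (c - b))

/-- The reduced single-fold uncertainty distribution, via the α-optimistic value
criterion with `k = α·θ_l − (1-α)·θ_r`, of the triangular two-fold uncertain
variable with parameters `a < b < c`. -/
noncomputable def triReduced (a b c k : ℝ) (x : ℝ) : ℝ :=
  if x ≤ a then 0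
  else if x ≤ a + (b - a) / Real.sqrt 2 then Ttri a b c x - k * Ttri a b c x
  else if x < b then Ttri a b c x - k * ((b - a) / (c - a) - Ttri a b c x)
  else if x = b then (b - a) / (c - a)
  else if x ≤ c - (c - b) / Real.sqrt 2 then
    1 - Utri a b c x - k * ((c - b) / (c - a) - Utri a b c x)
  else if x < c then 1 - Utri a b c x - k * Utri a b c x
  else 1

set_option maxHeartbeats 2000000 in
lemma triReduced_mono_aux (a b c k : ℝ) (hab : a < b) (hbc : b < c)
    (hk1 : -1 < k) (hk2 : k < 1) (x y : ℝ) (hxy : x ≤ y) :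
    triReduced a b c k x ≤ triReduced a b c k y := by
  have hba : 0 < b - a := by linarith
  have hca : 0 < c - a := by linarith
  have hcb : 0 < c - b := by linarith
  have hba' : b - a ≠ 0 := ne_of_gt hba
  have hca' : c - a ≠ 0 := ne_of_gt hca
  have hcb' : c - b ≠ 0 := ne_of_gt hcb
  have hs0 : (0:ℝ) < Real.sqrt 2 := Real.sqrt_pos.mpr (by norm_num)
  have hs2 : (Real.sqrt 2) ^ 2 = 2 := Real.sq_sqrt (by norm_num)
  have hs1 : (1:ℝ) < Real.sqrt 2 := by nlinarith
  have hm1a : a < a + (b - a) / Real.sqrt 2 := by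
    have := div_pos hba hs0; linarith
  have hm1b : a + (b - a) / Real.sqrt 2 < b := by
    have := div_lt_self hba hs1; linarith
  have hm2b : b < c - (c - b) / Real.sqrt 2 := by
    have := div_lt_self hcb hs1; linarith
  have hm2c : c - (c - b) / Real.sqrt 2 < c := by
    have := div_pos hcb hs0; linarith
  have hd0 : 0 < (b - a) / (c - a) := div_pos hba hca
  have he0 : 0 < (c - b) / (c - a) := div_pos hcb hca
  have hde : (b - a) / (c - a) + (c - b) / (c - a) = 1 := by
    field_simp
    ring
  set F := triReduced a b c k with hF
  set T := Ttri a b c with hT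
  set U := Utri a b c with hU
  -- basic facts about T and U
  have tnn : ∀ z, 0 ≤ T z := by
    intro z; rw [hT]; unfold Ttri
    exact div_nonneg (sq_nonneg _) (le_of_lt (mul_pos hba hca))
  have unn : ∀ z, 0 ≤ U z := by
    intro z; rw [hU]; unfold Utri
    exact div_nonneg (sq_nonneg _) (le_of_lt (mul_pos hca hcb))
  have tmono : ∀ z w, a ≤ z → z ≤ w → T z ≤ T w := by
    intro z w h1 h2; rw [hT]; unfold Ttri
    rw [div_le_div_iff₀ (mul_pos hba hca) (mul_pos hba hca)]
    have h3 : (z - a) ^ 2 ≤ (w - a) ^ 2 := by nlinarith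
    nlinarith [mul_pos hba hca]
  have umono : ∀ z w, z ≤ w → w ≤ c → U w ≤ U z := by
    intro z w h1 h2; rw [hU]; unfold Utri
    rw [div_le_div_iff₀ (mul_pos hca hcb) (mul_pos hca hcb)]
    have h3 : (c - w) ^ 2 ≤ (c - z) ^ 2 := by nlinarith
    nlinarith [mul_pos hca hcb]
  have tm1 : T (a + (b - a) / Real.sqrt 2) = (b - a) / (c - a) / 2 := by
    rw [hT]; unfold Ttri
    rw [show a + (b - a) / Real.sqrt 2 - a = (b - a) / Real.sqrt 2 from by ring,
      div_pow, hs2]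
    field_simp
  have tb : T b = (b - a) / (c - a) := by
    rw [hT]; unfold Ttri; field_simp
  have um2 : U (c - (c - b) / Real.sqrt 2) = (c - b) / (c - a) / 2 := by
    rw [hU]; unfold Utri
    rw [show c - (c - (c - b) / Real.sqrt 2) = (c - b) / Real.sqrt 2 from by ring,
      div_pow, hs2]
    field_simp
  have ub : U b = (c - b) / (c - a) := by
    rw [hU]; unfold Utri; field_simp
  -- branch evaluation
  have e0 : ∀ z, z ≤ a → F z = 0 := by
    intro z h; rw [hF]; unfold triReduced; rw [if_pos h]
  have e1 : ∀ z, a < z → z ≤ a + (b - a) / Real.sqrt 2 →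
      F z = T z - k * T z := by
    intro z h1 h2; rw [hF, hT]; unfold triReduced
    rw [if_neg (not_le.mpr h1), if_pos h2]
  have e2 : ∀ z, a + (b - a) / Real.sqrt 2 < z → z < b →
      F z = T z - k * ((b - a) / (c - a) - T z) := by
    intro z h1 h2; rw [hF, hT]; unfold triReduced
    rw [if_neg (not_le.mpr (by linarith)), if_neg (not_le.mpr h1), if_pos h2]
  have e3 : F b = (b - a) / (c - a) := by
    rw [hF]; unfold triReduced
    rw [if_neg (not_le.mpr hab), if_neg (not_le.mpr hm1b),
      if_neg (lt_irrefl b), if_pos rfl]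
  have e4 : ∀ z, b < z → z ≤ c - (c - b) / Real.sqrt 2 →
      F z = 1 - U z - k * ((c - b) / (c - a) - U z) := by
    intro z h1 h2; rw [hF, hU]; unfold triReduced
    rw [if_neg (not_le.mpr (by linarith)), if_neg (not_le.mpr (by linarith)),
      if_neg (not_lt.mpr h1.le), if_neg (by rintro rfl; exact lt_irrefl _ h1),
      if_pos h2]
  have e5 : ∀ z, c - (c - b) / Real.sqrt 2 < z → z < c →
      F z = 1 - U z - k * U z := by
    intro z h1 h2; rw [hF, hU]; unfold triReduced
    rw [if_neg (not_le.mpr (by linarith)), if_neg (not_le.mpr (by linarith)),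
      if_neg (not_lt.mpr (by linarith)),
      if_neg (by rintro rfl; linarith), if_neg (not_le.mpr h1), if_pos h2]
  have e6 : ∀ z, c ≤ z → F z = 1 := by
    intro z h; rw [hF]; unfold triReduced
    rw [if_neg (not_le.mpr (by linarith)), if_neg (not_le.mpr (by linarith)),
      if_neg (not_lt.mpr (by linarith)), if_neg (by rintro rfl; linarith),
      if_neg (not_le.mpr (by linarith)), if_neg (not_lt.mpr h)]
  -- chain inequalities between the boundary values
  have c1 : 0 ≤ (1 - k) * ((b - a) / (c - a) / 2) :=
    mul_nonneg (by linarith) (by linarith)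
  have c2 : (1 - k) * ((b - a) / (c - a) / 2) ≤ (b - a) / (c - a) := by
    have := mul_nonneg (by linarith : (0:ℝ) ≤ 1 + k) hd0.le
    linarith
  have c3 : (b - a) / (c - a) ≤ 1 - (1 + k) * ((c - b) / (c - a) / 2) := by
    have := mul_nonneg (by linarith : (0:ℝ) ≤ 1 - k) he0.le
    linarith
  have c4 : 1 - (1 + k) * ((c - b) / (c - a) / 2) ≤ 1 := by
    have := mul_nonneg (by linarith : (0:ℝ) ≤ 1 + k) he0.le
    linarith
  -- region bounds
  have b1l : ∀ z, a < z → z ≤ a + (b - a) / Real.sqrt 2 → 0 ≤ F z := by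
    intro z h1 h2; rw [e1 z h1 h2]
    nlinarith [tnn z]
  have b1u : ∀ z, a < z → z ≤ a + (b - a) / Real.sqrt 2 →
      F z ≤ (1 - k) * ((b - a) / (c - a) / 2) := by
    intro z h1 h2; rw [e1 z h1 h2]
    have h3 := tmono z _ h1.le h2
    rw [tm1] at h3
    nlinarith [mul_nonneg (by linarith : (0:ℝ) ≤ 1 - k)
      (by linarith : 0 ≤ (b - a) / (c - a) / 2 - T z)]
  have b2l : ∀ z, a + (b - a) / Real.sqrt 2 < z → z < b →
      (1 - k) * ((b - a) / (c - a) / 2) ≤ F z := by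
    intro z h1 h2; rw [e2 z h1 h2]
    have h3 := tmono _ z hm1a.le h1.le
    rw [tm1] at h3
    nlinarith [mul_nonneg (by linarith : (0:ℝ) ≤ 1 + k)
      (by linarith : 0 ≤ T z - (b - a) / (c - a) / 2)]
  have b2u : ∀ z, a + (b - a) / Real.sqrt 2 < z → z < b →
      F z ≤ (b - a) / (c - a) := by
    intro z h1 h2; rw [e2 z h1 h2]
    have h3 := tmono z b (by linarith) h2.le
    rw [tb] at h3
    nlinarith [mul_nonneg (by linarith : (0:ℝ) ≤ 1 + k)
      (by linarith : 0 ≤ (b - a) / (c - a) - T z)]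
  have b4l : ∀ z, b < z → z ≤ c - (c - b) / Real.sqrt 2 →
      (b - a) / (c - a) ≤ F z := by
    intro z h1 h2; rw [e4 z h1 h2]
    have h3 := umono b z h1.le (by linarith)
    rw [ub] at h3
    nlinarith [mul_nonneg (by linarith : (0:ℝ) ≤ 1 - k)
      (by linarith : 0 ≤ (c - b) / (c - a) - U z)]
  have b4u : ∀ z, b < z → z ≤ c - (c - b) / Real.sqrt 2 →
      F z ≤ 1 - (1 + k) * ((c - b) / (c - a) / 2) := by
    intro z h1 h2; rw [e4 z h1 h2]
    have h3 := umono z _ h2 hm2c.le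
    rw [um2] at h3
    nlinarith [mul_nonneg (by linarith : (0:ℝ) ≤ 1 - k)
      (by linarith : 0 ≤ U z - (c - b) / (c - a) / 2)]
  have b5l : ∀ z, c - (c - b) / Real.sqrt 2 < z → z < c →
      1 - (1 + k) * ((c - b) / (c - a) / 2) ≤ F z := by
    intro z h1 h2; rw [e5 z h1 h2]
    have h3 := umono _ z h1.le h2.le
    rw [um2] at h3
    nlinarith [mul_nonneg (by linarith : (0:ℝ) ≤ 1 + k)
      (by linarith : 0 ≤ (c - b) / (c - a) / 2 - U z)]
  have b5u : ∀ z, c - (c - b) / Real.sqrt 2 < z → z < c → F z ≤ 1 := by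
    intro z h1 h2; rw [e5 z h1 h2]
    nlinarith [unn z]
  -- monotonicity within regions
  have w1 : ∀ z w, a < z → z ≤ w → w ≤ a + (b - a) / Real.sqrt 2 →
      F z ≤ F w := by
    intro z w h1 h2 h3
    rw [e1 z h1 (le_trans h2 h3), e1 w (lt_of_lt_of_le h1 h2) h3]
    have h4 := tmono z w h1.le h2
    nlinarith [mul_nonneg (by linarith : (0:ℝ) ≤ 1 - k)
      (by linarith : 0 ≤ T w - T z)]
  have w2 : ∀ z w, a + (b - a) / Real.sqrt 2 < z → z ≤ w → w < b →
      F z ≤ F w := by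
    intro z w h1 h2 h3
    rw [e2 z h1 (lt_of_le_of_lt h2 h3), e2 w (lt_of_lt_of_le h1 h2) h3]
    have h4 := tmono z w (by linarith) h2
    nlinarith [mul_nonneg (by linarith : (0:ℝ) ≤ 1 + k)
      (by linarith : 0 ≤ T w - T z)]
  have w4 : ∀ z w, b < z → z ≤ w → w ≤ c - (c - b) / Real.sqrt 2 →
      F z ≤ F w := by
    intro z w h1 h2 h3
    rw [e4 z h1 (le_trans h2 h3), e4 w (lt_of_lt_of_le h1 h2) h3]
    have h4 := umono z w h2 (by linarith)
    nlinarith [mul_nonneg (by linarith : (0:ℝ) ≤ 1 - k)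
      (by linarith : 0 ≤ U z - U w)]
  have w5 : ∀ z w, c - (c - b) / Real.sqrt 2 < z → z ≤ w → w < c →
      F z ≤ F w := by
    intro z w h1 h2 h3
    rw [e5 z h1 (lt_of_le_of_lt h2 h3), e5 w (lt_of_lt_of_le h1 h2) h3]
    have h4 := umono z w h2 h3.le
    nlinarith [mul_nonneg (by linarith : (0:ℝ) ≤ 1 + k)
      (by linarith : 0 ≤ U z - U w)]
  -- aggregated lower bounds
  have gV1 : ∀ w, a + (b - a) / Real.sqrt 2 < w →
      (1 - k) * ((b - a) / (c - a) / 2) ≤ F w := by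
    intro w h
    rcases lt_trichotomy w b with hb | hb | hb
    · exact b2l w h hb
    · rw [hb, e3]; linarith
    · rcases le_or_gt w (c - (c - b) / Real.sqrt 2) with h2 | h2
      · have := b4l w hb h2; linarith
      · rcases lt_or_ge w c with h3 | h3
        · have := b5l w h2 h3; linarith
        · rw [e6 w h3]; linarith
  have gd : ∀ w, b ≤ w → (b - a) / (c - a) ≤ F w := by
    intro w h
    rcases eq_or_lt_of_le h with hb | hb
    · rw [← hb, e3]
    · rcases le_or_gt w (c - (c - b) / Real.sqrt 2) with h2 | h2
      · exact b4l w hb h2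
      · rcases lt_or_ge w c with h3 | h3
        · have := b5l w h2 h3; linarith
        · rw [e6 w h3]; linarith
  have gV4 : ∀ w, c - (c - b) / Real.sqrt 2 < w →
      1 - (1 + k) * ((c - b) / (c - a) / 2) ≤ F w := by
    intro w h
    rcases lt_or_ge w c with h3 | h3
    · exact b5l w h h3
    · rw [e6 w h3]; linarith
  -- aggregated upper bounds
  have lV1 : ∀ z, z ≤ a + (b - a) / Real.sqrt 2 →
      F z ≤ (1 - k) * ((b - a) / (c - a) / 2) := by
    intro z h
    rcases le_or_gt z a with h1 | h1
    · rw [e0 z h1]; linarith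
    · exact b1u z h1 h
  have ld : ∀ z, z ≤ b → F z ≤ (b - a) / (c - a) := by
    intro z h
    rcases le_or_gt z (a + (b - a) / Real.sqrt 2) with h1 | h1
    · have := lV1 z h1; linarith
    · rcases eq_or_lt_of_le h with hb | hb
      · rw [hb, e3]
      · exact b2u z h1 hb
  have lV4 : ∀ z, z ≤ c - (c - b) / Real.sqrt 2 →
      F z ≤ 1 - (1 + k) * ((c - b) / (c - a) / 2) := by
    intro z h
    rcases le_or_gt z b with h1 | h1
    · have := ld z h1; linarith
    · exact b4u z h1 h
  have l1 : ∀ z, F z ≤ 1 := by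
    intro z
    rcases le_or_gt z (c - (c - b) / Real.sqrt 2) with h1 | h1
    · have := lV4 z h1; linarith
    · rcases lt_or_ge z c with h2 | h2
      · exact b5u z h1 h2
      · rw [e6 z h2]
  have g0 : ∀ w, 0 ≤ F w := by
    intro w
    rcases le_or_gt w a with h1 | h1
    · rw [e0 w h1]
    · rcases le_or_gt w (a + (b - a) / Real.sqrt 2) with h2 | h2
      · exact b1l w h1 h2
      · have := gV1 w h2; linarith
  -- final case analysis
  rcases le_or_gt x a with h | h
  · rw [e0 x h]; exact g0 y
  rcases le_or_gt x (a + (b - a) / Real.sqrt 2) with h2 | h2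
  · rcases le_or_gt y (a + (b - a) / Real.sqrt 2) with h3 | h3
    · exact w1 x y h hxy h3
    · exact le_trans (b1u x h h2) (gV1 y h3)
  rcases lt_trichotomy x b with h3 | h3 | h3
  · rcases lt_or_ge y b with h4 | h4
    · exact w2 x y h2 hxy h4
    · exact le_trans (b2u x h2 h3) (gd y h4)
  · rw [h3, e3]; exact gd y (h3 ▸ hxy)
  rcases le_or_gt x (c - (c - b) / Real.sqrt 2) with h4 | h4
  · rcases le_or_gt y (c - (c - b) / Real.sqrt 2) with h5 | h5
    · exact w4 x y h3 hxy h5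
    · exact le_trans (b4u x h3 h4) (gV4 y h5)
  rcases lt_or_ge x c with h5 | h5
  · rcases lt_or_ge y c with h6 | h6
    · exact w5 x y h4 hxy h6
    · rw [e6 y h6]; exact l1 x
  · rw [e6 x h5, e6 y (le_trans h5 hxy)]

theorem triReduced_monotone (a b c θl θr α : ℝ) (hab : a < b) (hbc : b < c)
    (hθl : θl ∈ Set.Icc (0 : ℝ) 1) (hθr : θr ∈ Set.Icc (0 : ℝ) 1)
    (hα : α ∈ Set.Ioo (0 : ℝ) 1) :
    ∀ x y : ℝ, x ≤ y →
      triReduced a b c (α * θl - (1 - α) * θr) x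
        ≤ triReduced a b c (α * θl - (1 - α) * θr) y := by
  obtain ⟨hl0, hl1⟩ := hθl
  obtain ⟨hr0, hr1⟩ := hθr
  obtain ⟨ha0, ha1⟩ := hα
  intro x y hxy
  apply triReduced_mono_aux a b c _ hab hbc _ _ x y hxy
  · nlinarith
  · nlinarith
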